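/- Let G be a finite simple graph on a finite vertex set V that admits a tree decomposition of width at most k, where k > 1. Let h be a height function on G-compatible data, i.e., a map h : V → ℕ, and let V1 and V2 be nonempty subsets of V, each inducing a connected subgraph of G, such that b − a ≥ k + 1, where a = max_{v∈V1} h(v) and b = min_{v∈V2} h(v). Assume the following level-separation property (which holds for the height function of a planar embedded graph): for every integer i with a < i < b there exists a nonempty set Y_i ⊆ {v ∈ V : h(v) = i} inducing a connected subgraph of G such that every walk in G from a vertex of V2 to a vertex u with h(u) < i contains a vertex of Y_i. Then there exists a set Y ⊆ V with |Y| ≤ k that strongly disconnects V1 and V2, i.e., Y ∩ (V1 ∪ V2) = ∅ and every walk in G from a vertex of V1 to a vertex of V2 contains a vertex of Y. -/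

import Mathlib

open SimpleGraph

/-- A (finite-width) tree decomposition of a simple graph `G`:
`T` is a tree on node type `W` and `B` assigns a bag to each node, such that
every vertex lies in some bag, every edge is contained in some bag, and the
set of nodes whose bag contains a given vertex induces a connected subgraph
of `T`. -/
def IsTreeDecomp {V W : Type} (G : SimpleGraph V) (T : SimpleGraph W) (B : W → Set V) : Prop :=
  T.IsTree ∧ (∀ v, ∃ w, v ∈ B w) ∧ (∀ u v, G.Adj u v → ∃ w, u ∈ B w ∧ v ∈ B w) ∧
    ∀ v : V, (T.induce {w | v ∈ B w}).Connected

/-- `S` meets every walk of `G` from a vertex of `A` to a vertex of `B`. -/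
def SeparatesWalks {V : Type} (G : SimpleGraph V) (A B S : Set V) : Prop :=
  ∀ a ∈ A, ∀ b ∈ B, ∀ p : G.Walk a b, ∃ u ∈ p.support, u ∈ S

set_option linter.unusedSectionVars false

namespace StmtZero

variable {W : Type} [DecidableEq W] {T : SimpleGraph W}

/-- The unique path between two nodes of a tree. -/
noncomputable def tp (hT : T.IsTree) (u v : W) : T.Walk u v :=
  (hT.existsUnique_path u v).choose

lemma tp_isPath (hT : T.IsTree) (u v : W) : (tp hT u v).IsPath :=
  (hT.existsUnique_path u v).choose_spec.1

lemma tp_eq (hT : T.IsTree) {u v : W} (p : T.Walk u v) (hp : p.IsPath) : p = tp hT u v :=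
  (hT.existsUnique_path u v).choose_spec.2 p hp

/-- Path-closed sets of nodes ("subtrees"). -/
def PC (hT : T.IsTree) (S : Set W) : Prop :=
  ∀ u ∈ S, ∀ v ∈ S, ∀ z ∈ (tp hT u v).support, z ∈ S

lemma pc_inter {hT : T.IsTree} {S S' : Set W} (hS : PC hT S) (hS' : PC hT S') :
    PC hT (S ∩ S') := by
  intro u hu v hv z hz
  exact ⟨hS u hu.1 v hv.1 z hz, hS' u hu.2 v hv.2 z hz⟩

/-- The unique path between `u` and `v` is inside the union of the paths via `m`. -/
lemma tp_support_union (hT : T.IsTree) (u m v : W) :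
    ∀ z ∈ (tp hT u v).support, z ∈ (tp hT u m).support ∨ z ∈ (tp hT m v).support := by
  intro z hz
  set w0 : T.Walk u v := (tp hT u m).append (tp hT m v) with hw0
  have h1 : (w0.toPath : T.Walk u v) = tp hT u v := tp_eq hT _ w0.toPath.2
  rw [← h1] at hz
  have h2 := Walk.support_toPath_subset w0 hz
  rw [hw0, Walk.support_append] at h2
  rcases List.mem_append.1 h2 with h | h
  · exact Or.inl h
  · exact Or.inr (List.mem_of_mem_tail h)

/-- Connected sets of nodes are path-closed. -/
lemma pc_of_induceConnected (hT : T.IsTree) {S : Set W} (hS : (T.induce S).Connected) :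
    PC hT S := by
  intro u hu v hv z hz
  obtain ⟨w0⟩ := hS.preconnected ⟨u, hu⟩ ⟨v, hv⟩
  let f : T.induce S →g T := (SimpleGraph.Embedding.induce S).toHom
  let w1 : T.Walk u v := w0.map f
  have hsup : ∀ x ∈ w1.support, x ∈ S := by
    intro x hx
    change x ∈ (w0.map f).support at hx; rw [Walk.support_map] at hx
    obtain ⟨⟨x', hx'⟩, _, rfl⟩ := List.mem_map.1 hx
    exact hx'
  have h1 : (w1.toPath : T.Walk u v) = tp hT u v := tp_eq hT _ w1.toPath.2
  rw [← h1] at hz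
  exact hsup z (Walk.support_toPath_subset _ hz)

section Decomp

variable {V : Type} {G : SimpleGraph V} {B : W → Set V}

/-- The set of nodes whose bag meets `P`. -/
def Nds (B : W → Set V) (P : Set V) : Set W := {w | ∃ v ∈ P, v ∈ B w}

lemma pc_nds (hT : T.IsTree)
    (hB4 : ∀ v : V, (T.induce {w | v ∈ B w}).Connected)
    (hedge : ∀ u v, G.Adj u v → ∃ w, u ∈ B w ∧ v ∈ B w)
    {P : Set V} (hP : (G.induce P).Connected) : PC hT (Nds B P) := by
  have key : ∀ {p p' : V} (wk : G.Walk p p'), (∀ z ∈ wk.support, z ∈ P) →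
      ∀ u, p ∈ B u → ∀ v, p' ∈ B v → ∀ z ∈ (tp hT u v).support, z ∈ Nds B P := by
    intro p p' wk
    induction wk with
    | @nil p =>
      intro hsup u hu v hv z hz
      have hpc := pc_of_induceConnected hT (hB4 p)
      have := hpc u hu v hv z hz
      exact ⟨p, hsup p (Walk.start_mem_support _), this⟩
    | @cons p p1 p' hadj rest ih =>
      intro hsup u hu v hv z hz
      obtain ⟨m, hm1, hm2⟩ := hedge _ _ hadj
      rcases tp_support_union hT u m v z hz with h | h
      · have hpc := pc_of_induceConnected hT (hB4 p)
        have := hpc u hu m hm1 z h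
        exact ⟨p, hsup p (Walk.start_mem_support _), this⟩
      · exact ih (fun z hz => hsup z (by rw [Walk.support_cons]; exact List.mem_cons_of_mem _ hz))
          m hm2 v hv z h
  intro u hu v hv z hz
  obtain ⟨p, hpP, hpu⟩ := hu
  obtain ⟨p', hp'P, hp'v⟩ := hv
  obtain ⟨w0⟩ := hP.preconnected ⟨p, hpP⟩ ⟨p', hp'P⟩
  let f : G.induce P →g G := (SimpleGraph.Embedding.induce P).toHom
  let wk1 : G.Walk p p' := w0.map f
  have hsup : ∀ z ∈ wk1.support, z ∈ P := by
    intro x hx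
    change x ∈ (w0.map f).support at hx; rw [Walk.support_map] at hx
    obtain ⟨⟨x', hx'⟩, _, rfl⟩ := List.mem_map.1 hx
    exact hx'
  exact key wk1 hsup u hpu v hp'v z hz

end Decomp

section Sides

/-- One cannot cross a deleted tree edge. -/
lemma nocross (hT : T.IsTree) {x y : W} (hxy : T.Adj x y) :
    ¬ (T.deleteEdges {s(x, y)}).Reachable x y := by
  intro hr
  obtain ⟨w0⟩ := hr
  set p0 : (T.deleteEdges {s(x, y)}).Walk x y := (w0.toPath : (T.deleteEdges {s(x,y)}).Walk x y)
    with hp0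
  have hsuble : ∀ e ∈ p0.edges, e ∈ T.edgeSet := by
    intro e he
    have := Walk.edges_subset_edgeSet _ he
    rw [SimpleGraph.edgeSet_deleteEdges] at this
    exact this.1
  have hnotin : s(x, y) ∉ p0.edges := by
    intro he
    have := Walk.edges_subset_edgeSet _ he
    rw [SimpleGraph.edgeSet_deleteEdges] at this
    exact this.2 rfl
  set p1 : T.Walk x y := p0.transfer T hsuble with hp1
  have hp1path : p1.IsPath := w0.toPath.2.transfer _
  have h1 : p1 = tp hT x y := tp_eq hT p1 hp1path
  set p2 : T.Walk x y := Walk.cons hxy Walk.nil with hp2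
  have hp2path : p2.IsPath := by
    rw [hp2]
    simp [Walk.cons_isPath_iff, hxy.ne]
  have h2 : p2 = tp hT x y := tp_eq hT p2 hp2path
  have hmem : s(x, y) ∈ p1.edges := by
    rw [h1, ← h2, hp2]
    simp
  rw [hp1, Walk.edges_transfer] at hmem
  exact hnotin hmem

/-- Every node reaches `x` or `y` after deleting edge `xy` of a tree. -/
lemma reach_or (hT : T.IsTree) {x y : W} (hxy : T.Adj x y) (w : W) :
    (T.deleteEdges {s(x, y)}).Reachable w x ∨ (T.deleteEdges {s(x, y)}).Reachable w y := by
  obtain ⟨wk⟩ := hT.isConnected.preconnected w x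
  induction wk with
  | nil => exact Or.inl (Reachable.refl _)
  | @cons w w1 x hadj rest ih =>
    rcases ih hxy with h | h
    · by_cases he : s(w, w1) = s(x, y)
      · rw [Sym2.eq_iff] at he
        rcases he with ⟨rfl, rfl⟩ | ⟨rfl, rfl⟩
        · exact Or.inl (Reachable.refl _)
        · exact Or.inr (Reachable.refl _)
      · have hadj' : (T.deleteEdges {s(x, y)}).Adj w w1 := by
          rw [SimpleGraph.deleteEdges_adj]
          exact ⟨hadj, by simpa using he⟩
        exact Or.inl (hadj'.reachable.trans h)
    · by_cases he : s(w, w1) = s(x, y)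
      · rw [Sym2.eq_iff] at he
        rcases he with ⟨rfl, rfl⟩ | ⟨rfl, rfl⟩
        · exact Or.inl (Reachable.refl _)
        · exact Or.inr (Reachable.refl _)
      · have hadj' : (T.deleteEdges {s(x, y)}).Adj w w1 := by
          rw [SimpleGraph.deleteEdges_adj]
          exact ⟨hadj, by simpa using he⟩
        exact Or.inr (hadj'.reachable.trans h)

/-- If a path-closed set contains nodes on both sides of a tree edge, it contains both
endpoints of the edge. -/
lemma touch (hT : T.IsTree) {x y : W} (hxy : T.Adj x y) {S : Set W} (hS : PC hT S)
    {w1 w2 : W} (h1 : w1 ∈ S) (h2 : w2 ∈ S)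
    (hr1 : (T.deleteEdges {s(x, y)}).Reachable w1 x)
    (hr2 : (T.deleteEdges {s(x, y)}).Reachable w2 y) :
    x ∈ S ∧ y ∈ S := by
  by_cases he : s(x, y) ∈ (tp hT w1 w2).edges
  · exact ⟨hS _ h1 _ h2 x (Walk.fst_mem_support_of_mem_edges _ he),
      hS _ h1 _ h2 y (Walk.snd_mem_support_of_mem_edges _ he)⟩
  · exfalso
    have hreach : (T.deleteEdges {s(x, y)}).Reachable w1 w2 := by
      refine ⟨(tp hT w1 w2).toDeleteEdges {s(x, y)} ?_⟩
      intro e hee hes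
      rw [Set.mem_singleton_iff] at hes
      exact he (hes ▸ hee)
    exact nocross hT hxy ((hr1.symm.trans hreach).trans hr2)

/-- Finding the transition edge on a path leaving a set. -/
lemma transition {A : Set W} : ∀ {r s : W} (p : T.Walk r s), p.IsPath → r ∈ A → s ∉ A →
    ∃ (x y : W) (_ : T.Adj x y) (q : T.Walk y s), x ∈ A ∧ y ∉ A ∧ x ∉ q.support := by
  intro r s p
  induction p with
  | nil => intro _ hr hs; exact absurd hr hs
  | @cons u u1 s hadj q ih =>
    intro hp hu hs
    by_cases h1 : u1 ∈ A
    · obtain ⟨x, y, hxy, q', hx, hy, hq⟩ := ih ((Walk.cons_isPath_iff _ _).1 hp).1 h1 hs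
      exact ⟨x, y, hxy, q', hx, hy, hq⟩
    · exact ⟨u, u1, hadj, q, hu, h1, ((Walk.cons_isPath_iff _ _).1 hp).2⟩

end Sides

section Median

lemma median (hT : T.IsTree) : ∀ {c a b : W} (p : T.Walk c a) (q : T.Walk c b),
    p.IsPath → q.IsPath →
    ∃ m, m ∈ p.support ∧ m ∈ q.support ∧ m ∈ (tp hT a b).support := by
  intro c a b p
  induction p generalizing b with
  | @nil c =>
    intro q _ _
    exact ⟨c, Walk.start_mem_support _, Walk.start_mem_support _, Walk.start_mem_support _⟩
  | @cons c c1 a hadj p' ih =>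
    intro q hp hq
    cases q with
    | nil =>
      exact ⟨c, Walk.start_mem_support _, Walk.start_mem_support _, Walk.end_mem_support _⟩
    | @cons _ c2 _ hadj2 q' =>
      by_cases hcc : c1 = c2
      · subst hcc
        obtain ⟨m, h1, h2, h3⟩ := ih q' ((Walk.cons_isPath_iff _ _).1 hp).1
          ((Walk.cons_isPath_iff _ _).1 hq).1
        exact ⟨m, by rw [Walk.support_cons]; exact List.mem_cons_of_mem _ h1,
          by rw [Walk.support_cons]; exact List.mem_cons_of_mem _ h2, h3⟩
      · refine ⟨c, Walk.start_mem_support _, Walk.start_mem_support _, ?_⟩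
        by_contra hc
        have hcp' : c ∉ p'.support := ((Walk.cons_isPath_iff _ _).1 hp).2
        have hcq' : c ∉ q'.support := ((Walk.cons_isPath_iff _ _).1 hq).2
        -- a reaches c1 avoiding the edge
        have hra : (T.deleteEdges {s(c, c1)}).Reachable a c1 := by
          refine ⟨(p'.reverse.toDeleteEdges {s(c, c1)} ?_)⟩
          intro e hee hes
          rw [Set.mem_singleton_iff] at hes
          subst hes
          rw [Walk.edges_reverse, List.mem_reverse] at hee
          exact hcp' (Walk.fst_mem_support_of_mem_edges _ hee)
        -- b reaches c avoiding the edge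
        have hrb : (T.deleteEdges {s(c, c1)}).Reachable b c := by
          refine ⟨((Walk.cons hadj2 q').reverse.toDeleteEdges {s(c, c1)} ?_)⟩
          intro e hee hes
          rw [Set.mem_singleton_iff] at hes
          subst hes
          rw [Walk.edges_reverse, List.mem_reverse, Walk.edges_cons] at hee
          rcases List.mem_cons.1 hee with h | h
          · exact hcc (Sym2.congr_right.1 h)
          · exact hcq' (Walk.fst_mem_support_of_mem_edges _ h)
        -- the a-b path avoids the edge
        have hab : (T.deleteEdges {s(c, c1)}).Reachable a b := by
          refine ⟨((tp hT a b).toDeleteEdges {s(c, c1)} ?_)⟩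
          intro e hee hes
          rw [Set.mem_singleton_iff] at hes
          subst hes
          exact hc (Walk.fst_mem_support_of_mem_edges _ hee)
        exact nocross hT hadj ((hra.symm.trans hab).trans hrb).symm
end Median

section Helly

lemma helly3 (hT : T.IsTree) {X Y Z : Set W} (hX : PC hT X) (hY : PC hT Y) (hZ : PC hT Z)
    (hXY : (X ∩ Y).Nonempty) (hYZ : (Y ∩ Z).Nonempty) (hZX : (Z ∩ X).Nonempty) :
    (X ∩ Y ∩ Z).Nonempty := by
  obtain ⟨γ, hγX, hγY⟩ := hXY
  obtain ⟨α, hαY, hαZ⟩ := hYZ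
  obtain ⟨β, hβZ, hβX⟩ := hZX
  obtain ⟨m, hm1, hm2, hm3⟩ := median hT (tp hT γ α) (tp hT γ β)
    (tp_isPath hT γ α) (tp_isPath hT γ β)
  exact ⟨m, ⟨hX γ hγX β hβX m hm2, hY γ hγY α hαY m hm1⟩, hZ α hαZ β hβZ m hm3⟩

lemma helly (hT : T.IsTree) : ∀ (n : ℕ) (f : Fin (n + 1) → Set W), (∀ i, PC hT (f i)) →
    (∀ i j, (f i ∩ f j).Nonempty) → ∃ w, ∀ i, w ∈ f i := by
  intro n
  induction n with
  | zero =>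
    intro f _ hp
    obtain ⟨w, hw, _⟩ := hp 0 0
    refine ⟨w, fun i => ?_⟩
    have h1 : i = 0 := by
      have := i.isLt
      exact Fin.eq_of_val_eq (by simp only [Fin.val_zero]; omega)
    rw [h1]; exact hw
  | succ n ih =>
    intro f hc hp
    set g : Fin (n + 1) → Set W := fun i => f i.castSucc ∩ f (Fin.last (n + 1)) with hg
    have hgc : ∀ i, PC hT (g i) := fun i => pc_inter (hc _) (hc _)
    have hgp : ∀ i j, (g i ∩ g j).Nonempty := by
      intro i j
      obtain ⟨w, hw⟩ := helly3 hT (hc i.castSucc) (hc j.castSucc) (hc (Fin.last (n + 1)))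
        (hp _ _) (hp _ _) (hp _ _)
      exact ⟨w, ⟨⟨hw.1.1, hw.2⟩, hw.1.2, hw.2⟩⟩
    obtain ⟨w, hw⟩ := ih g hgc hgp
    refine ⟨w, fun i => ?_⟩
    rcases Fin.eq_castSucc_or_eq_last i with ⟨j, rfl⟩ | rfl
    · exact (hw j).1
    · exact (hw 0).2

end Helly

section Walks

variable {V : Type} [DecidableEq V] {G : SimpleGraph V}

lemma mem_rev {a b : V} (q : G.Walk a b) (z : V) :
    z ∈ q.reverse.support ↔ z ∈ q.support := by
  rw [Walk.support_reverse]; exact List.mem_reverse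

lemma trunc {S0 : Set V} : ∀ {v w : V} (p : G.Walk v w), v ∉ S0 → w ∈ S0 →
    ∃ (u : V) (_ : u ∈ S0) (q : G.Walk v u), (∀ z ∈ q.support, z ∈ p.support) ∧
      (∀ z ∈ q.support, z ∈ S0 → z = u) := by
  intro v w p
  induction p with
  | @nil v => intro hv hw; exact absurd hw hv
  | @cons v v' w hadj q ih =>
    intro hv hw
    by_cases h1 : v' ∈ S0
    · refine ⟨v', h1, Walk.cons hadj Walk.nil, ?_, ?_⟩
      · intro z hz
        rw [Walk.support_cons] at hz ⊢
        rcases List.mem_cons.1 hz with rfl | hz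
        · exact List.mem_cons_self
        · simp only [Walk.support_nil, List.mem_singleton] at hz
          subst hz
          exact List.mem_cons_of_mem _ (Walk.start_mem_support q)
      · intro z hz hzS
        rw [Walk.support_cons] at hz
        rcases List.mem_cons.1 hz with rfl | hz
        · exact absurd hzS hv
        · simpa using hz
    · obtain ⟨u, hu, q', hsub, hanch⟩ := ih h1 hw
      refine ⟨u, hu, Walk.cons hadj q', ?_, ?_⟩
      · intro z hz
        rw [Walk.support_cons] at hz ⊢
        rcases List.mem_cons.1 hz with rfl | hz
        · exact List.mem_cons_self
        · exact List.mem_cons_of_mem _ (hsub z hz)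
      · intro z hz hzS
        rw [Walk.support_cons] at hz
        rcases List.mem_cons.1 hz with rfl | hz
        · exact absurd hzS hv
        · exact hanch z hz hzS

lemma cln {V1 V2 : Set V} (hdisj : ∀ z, z ∈ V1 → z ∈ V2 → False) {v1 v2 : V}
    (hv1 : v1 ∈ V1) (hv2 : v2 ∈ V2) (p : G.Walk v1 v2) :
    ∃ (u1 : V) (_ : u1 ∈ V1) (u2 : V) (_ : u2 ∈ V2) (Wk : G.Walk u2 u1),
      Wk.IsPath ∧ (∀ z ∈ Wk.support, z ∈ p.support) ∧
      (∀ z ∈ Wk.support, z ∈ V2 → z = u2) ∧ (∀ z ∈ Wk.support, z ∈ V1 → z = u1) := by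
  obtain ⟨u1, hu1, W1, hsub1, hanch1⟩ :=
    trunc (S0 := V1) p.reverse (fun h => hdisj v2 h hv2) hv1
  obtain ⟨u2, hu2, W2, hsub2, hanch2⟩ :=
    trunc (S0 := V2) W1.reverse (fun h => hdisj u1 hu1 h) hv2
  set W3 := W2.reverse with hW3
  set Wk : G.Walk u2 u1 := W3.toPath.val with hWk
  have hWkpath : Wk.IsPath := W3.toPath.2
  have hsubW2 : ∀ z ∈ Wk.support, z ∈ W2.support := by
    intro z hz
    have h0 := Walk.support_toPath_subset W3 hz
    exact (mem_rev W2 z).1 h0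
  have hsubW1 : ∀ z ∈ Wk.support, z ∈ W1.support := by
    intro z hz
    exact (mem_rev W1 z).1 (hsub2 z (hsubW2 z hz))
  refine ⟨u1, hu1, u2, hu2, Wk, hWkpath, ?_, ?_, ?_⟩
  · intro z hz
    exact (mem_rev p z).1 (hsub1 z (hsubW1 z hz))
  · intro z hz
    exact hanch2 z (hsubW2 z hz)
  · intro z hz
    exact hanch1 z (hsubW1 z hz)

lemma not_start_mem_dropUntil {u v y : V} (p : G.Walk u v) (hp : p.IsPath)
    (hy : y ∈ p.support) (hne : y ≠ u) : u ∉ (p.dropUntil y hy).support := by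
  intro hu
  have hnodup : ((p.takeUntil y hy).append (p.dropUntil y hy)).support.Nodup := by
    rw [p.take_spec hy]; exact hp.support_nodup
  rw [Walk.support_append] at hnodup
  have hdisj := List.disjoint_of_nodup_append hnodup
  rw [Walk.support_eq_cons (p.dropUntil y hy)] at hu
  rcases List.mem_cons.1 hu with h | h
  · exact hne h.symm
  · exact hdisj (Walk.start_mem_support (p.takeUntil y hy)) h

lemma not_end_mem_takeUntil {u v y : V} (p : G.Walk u v) (hp : p.IsPath)
    (hy : y ∈ p.support) (hne : y ≠ v) : v ∉ (p.takeUntil y hy).support := by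
  intro hv
  have hnodup : ((p.takeUntil y hy).append (p.dropUntil y hy)).support.Nodup := by
    rw [p.take_spec hy]; exact hp.support_nodup
  rw [Walk.support_append] at hnodup
  have hdisj := List.disjoint_of_nodup_append hnodup
  have hvd : v ∈ (p.dropUntil y hy).support := Walk.end_mem_support _
  rw [Walk.support_eq_cons (p.dropUntil y hy)] at hvd
  rcases List.mem_cons.1 hvd with h | h
  · exact hne h.symm
  · exact hdisj hv h

/-- The "subwalk between occurrences" property for a pair of sets `R`, `S`. -/
def HU (G : SimpleGraph V) (V1 V2 R S : Set V) : Prop :=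
  ∀ u1 ∈ V1, ∀ u2 ∈ V2, ∀ Wk : G.Walk u2 u1, Wk.IsPath →
    (∀ z ∈ Wk.support, z ∈ V2 → z = u2) → (∀ z ∈ Wk.support, z ∈ V1 → z = u1) →
    ∃ (α β : V) (U : G.Walk α β), ((α ∈ R ∧ β ∈ S) ∨ (α ∈ S ∧ β ∈ R)) ∧
      (∀ z ∈ U.support, z ∈ Wk.support) ∧ (∀ z ∈ U.support, z ∈ V1 ∪ V2 → z ∈ R ∪ S)

lemma hu_D {V1 V2 : Set V} : HU G V1 V2 V1 V2 := by
  intro u1 h1 u2 h2 Wk _ _ _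
  exact ⟨u2, u1, Wk, Or.inr ⟨h2, h1⟩, fun z hz => hz, fun z _ hz => hz⟩

lemma hu_B {V1 V2 Ym : Set V}
    (hocc : ∀ u1 ∈ V1, ∀ u2 ∈ V2, ∀ Wk : G.Walk u2 u1, ∃ y ∈ Wk.support, y ∈ Ym)
    (hYV2 : ∀ z ∈ Ym, z ∈ V2 → False) : HU G V1 V2 V1 Ym := by
  intro u1 h1 u2 h2 Wk hpath hanch2 _
  obtain ⟨y, hy, hyY⟩ := hocc u1 h1 u2 h2 Wk
  refine ⟨y, u1, Wk.dropUntil y hy, Or.inr ⟨hyY, h1⟩,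
    fun z hz => Walk.support_dropUntil_subset _ _ hz, ?_⟩
  intro z hz hzV
  rcases hzV with hzV | hzV
  · exact Or.inl hzV
  · exfalso
    have hz2 : z = u2 := hanch2 z (Walk.support_dropUntil_subset _ _ hz) hzV
    subst hz2
    exact not_start_mem_dropUntil Wk hpath hy (fun h => hYV2 y hyY (h ▸ h2)) hz

lemma hu_C {V1 V2 Ym : Set V}
    (hocc : ∀ u1 ∈ V1, ∀ u2 ∈ V2, ∀ Wk : G.Walk u2 u1, ∃ y ∈ Wk.support, y ∈ Ym)
    (hYV1 : ∀ z ∈ Ym, z ∈ V1 → False) : HU G V1 V2 V2 Ym := by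
  intro u1 h1 u2 h2 Wk hpath _ hanch1
  obtain ⟨y, hy, hyY⟩ := hocc u1 h1 u2 h2 Wk
  refine ⟨u2, y, Wk.takeUntil y hy, Or.inl ⟨h2, hyY⟩,
    fun z hz => Walk.support_takeUntil_subset _ _ hz, ?_⟩
  intro z hz hzV
  rcases hzV with hzV | hzV
  · exfalso
    have hz1 : z = u1 := hanch1 z (Walk.support_takeUntil_subset _ _ hz) hzV
    subst hz1
    exact not_end_mem_takeUntil Wk hpath hy (fun h => hYV1 y hyY (h ▸ h1)) hz
  · exact Or.inl hzV

lemma hu_A {V1 V2 Yi Yj : Set V}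
    (hocci : ∀ u1 ∈ V1, ∀ u2 ∈ V2, ∀ Wk : G.Walk u2 u1, ∃ y ∈ Wk.support, y ∈ Yi)
    (hoccj : ∀ u1 ∈ V1, ∀ u2 ∈ V2, ∀ Wk : G.Walk u2 u1, ∃ y ∈ Wk.support, y ∈ Yj)
    (hYiV : ∀ z ∈ Yi, z ∈ V1 ∪ V2 → False)
    (hYjV : ∀ z ∈ Yj, z ∈ V1 ∪ V2 → False) : HU G V1 V2 Yi Yj := by
  intro u1 h1 u2 h2 Wk hpath hanch2 hanch1
  obtain ⟨yi, hyi, hyiY⟩ := hocci u1 h1 u2 h2 Wk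
  obtain ⟨yj, hyj, hyjY⟩ := hoccj u1 h1 u2 h2 Wk
  have hsplit : yj ∈ (Wk.takeUntil yi hyi).support ∨ yj ∈ (Wk.dropUntil yi hyi).support := by
    rw [← Walk.mem_support_append_iff, Wk.take_spec hyi]
    exact hyj
  rcases hsplit with hcase | hcase
  · -- yj occurs before yi
    refine ⟨yj, yi, (Wk.takeUntil yi hyi).dropUntil yj hcase, Or.inr ⟨hyjY, hyiY⟩, ?_, ?_⟩
    · intro z hz
      exact Walk.support_takeUntil_subset _ _ (Walk.support_dropUntil_subset _ _ hz)
    · intro z hz hzV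
      exfalso
      rcases hzV with hzV | hzV
      · have hz1 : z = u1 := hanch1 z
          (Walk.support_takeUntil_subset _ _ (Walk.support_dropUntil_subset _ _ hz)) hzV
        subst hz1
        exact not_end_mem_takeUntil Wk hpath hyi
          (fun h => hYiV yi hyiY (Or.inl (h ▸ h1)))
          (Walk.support_dropUntil_subset _ _ hz)
      · have hz2 : z = u2 := hanch2 z
          (Walk.support_takeUntil_subset _ _ (Walk.support_dropUntil_subset _ _ hz)) hzV
        subst hz2
        exact not_start_mem_dropUntil (Wk.takeUntil yi hyi) (hpath.takeUntil _) hcase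
          (fun h => hYjV yj hyjY (Or.inr (h ▸ h2))) hz
  · -- yj occurs after yi
    refine ⟨yi, yj, (Wk.dropUntil yi hyi).takeUntil yj hcase, Or.inl ⟨hyiY, hyjY⟩, ?_, ?_⟩
    · intro z hz
      exact Walk.support_dropUntil_subset _ _ (Walk.support_takeUntil_subset _ _ hz)
    · intro z hz hzV
      exfalso
      rcases hzV with hzV | hzV
      · have hz1 : z = u1 := hanch1 z
          (Walk.support_dropUntil_subset _ _ (Walk.support_takeUntil_subset _ _ hz)) hzV
        subst hz1
        exact not_end_mem_takeUntil (Wk.dropUntil yi hyi) (hpath.dropUntil _) hcase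
          (fun h => hYjV yj hyjY (Or.inl (h ▸ h1))) hz
      · have hz2 : z = u2 := hanch2 z
          (Walk.support_dropUntil_subset _ _ (Walk.support_takeUntil_subset _ _ hz)) hzV
        subst hz2
        exact not_start_mem_dropUntil Wk hpath hyi
          (fun h => hYiV yi hyiY (Or.inr (h ▸ h2)))
          (Walk.support_takeUntil_subset _ _ hz)

end Walks

section Crossing

variable {W : Type} [DecidableEq W] {T : SimpleGraph W}
variable {V : Type} {G : SimpleGraph V} {B : W → Set V}

lemma crossing (hT : T.IsTree) {x y : W} (hxy : T.Adj x y)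
    (hB4 : ∀ v : V, (T.induce {w | v ∈ B w}).Connected)
    (hedge : ∀ u v, G.Adj u v → ∃ w, u ∈ B w ∧ v ∈ B w) :
    ∀ {α β : V} (U : G.Walk α β),
      (∃ w, α ∈ B w ∧ (T.deleteEdges {s(x, y)}).Reachable w x) →
      (∃ w, β ∈ B w ∧ (T.deleteEdges {s(x, y)}).Reachable w y) →
      ∃ ξ ∈ U.support, ξ ∈ B x ∧ ξ ∈ B y := by
  intro α β U
  induction U with
  | @nil α =>
    intro hα hβ
    obtain ⟨w1, hw1, hr1⟩ := hα
    obtain ⟨w2, hw2, hr2⟩ := hβ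
    have hpc := pc_of_induceConnected hT (hB4 α)
    have hres := touch hT hxy hpc (show w1 ∈ {w | α ∈ B w} from hw1)
      (show w2 ∈ {w | α ∈ B w} from hw2) hr1 hr2
    exact ⟨α, Walk.start_mem_support _, hres.1, hres.2⟩
  | @cons α γ β hadj rest ih =>
    intro hα hβ
    by_cases h1 : ∃ w, γ ∈ B w ∧ (T.deleteEdges {s(x, y)}).Reachable w x
    · obtain ⟨ξ, hξ1, hξ2⟩ := ih h1 hβ
      exact ⟨ξ, by rw [Walk.support_cons]; exact List.mem_cons_of_mem _ hξ1, hξ2⟩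
    · obtain ⟨m, hm1, hm2⟩ := hedge _ _ hadj
      have hmy : (T.deleteEdges {s(x, y)}).Reachable m y := by
        rcases reach_or hT hxy m with hx' | hy'
        · exact absurd ⟨m, hm2, hx'⟩ h1
        · exact hy'
      obtain ⟨wα, hwα, hrα⟩ := hα
      have hpc := pc_of_induceConnected hT (hB4 α)
      have hres := touch hT hxy hpc (show wα ∈ {w | α ∈ B w} from hwα)
        (show m ∈ {w | α ∈ B w} from hm1) hrα hmy
      exact ⟨α, Walk.start_mem_support _, hres.1, hres.2⟩

end Crossing

section Win

variable {V : Type} [Fintype V] [DecidableEq V] {W : Type} [DecidableEq W]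
variable {G : SimpleGraph V} {T : SimpleGraph W} {B : W → Set V}

lemma winlem {k : ℕ}
    (hdec : IsTreeDecomp G T B) (hbag : ∀ w, (B w).ncard ≤ k + 1)
    {V1 V2 : Set V} (hdisjV : ∀ z, z ∈ V1 → z ∈ V2 → False)
    {R S : Set V} (hRne : R.Nonempty) (hSne : S.Nonempty)
    (hRconn : (G.induce R).Connected) (hSconn : (G.induce S).Connected)
    (hdisjN : ¬ (Nds B R ∩ Nds B S).Nonempty)
    (hHU : HU G V1 V2 R S) :
    ∃ Y : Set V, Y.ncard ≤ k ∧ Y ∩ (V1 ∪ V2) = ∅ ∧ SeparatesWalks G V1 V2 Y := by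
  obtain ⟨hT, hcov, hedge, hB4⟩ := hdec
  have hpcR : PC hT (Nds B R) := pc_nds hT hB4 hedge hRconn
  have hpcS : PC hT (Nds B S) := pc_nds hT hB4 hedge hSconn
  obtain ⟨r, hr⟩ := hRne
  obtain ⟨wr, hwr⟩ := hcov r
  have hr0 : wr ∈ Nds B R := ⟨r, hr, hwr⟩
  obtain ⟨s', hs'⟩ := hSne
  obtain ⟨ws, hws⟩ := hcov s'
  have hs0 : ws ∈ Nds B S := ⟨s', hs', hws⟩
  have hsnotR : ws ∉ Nds B R := fun h => hdisjN ⟨ws, h, hs0⟩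
  obtain ⟨x, y, hxy, q, hx, hy, hxq⟩ :=
    transition (tp hT wr ws) (tp_isPath hT wr ws) hr0 hsnotR
  have hXreach : ∀ w ∈ Nds B R, (T.deleteEdges {s(x, y)}).Reachable w x := by
    intro w hw
    refine ⟨(tp hT w x).toDeleteEdges {s(x, y)} ?_⟩
    intro e hee hes
    rw [Set.mem_singleton_iff] at hes; subst hes
    exact hy (hpcR w hw x hx y (Walk.snd_mem_support_of_mem_edges _ hee))
  have hs0y : (T.deleteEdges {s(x, y)}).Reachable ws y := by
    refine Reachable.symm ⟨q.toDeleteEdges {s(x, y)} ?_⟩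
    intro e hee hes
    rw [Set.mem_singleton_iff] at hes; subst hes
    exact hxq (Walk.fst_mem_support_of_mem_edges _ hee)
  have hYreach : ∀ w ∈ Nds B S, (T.deleteEdges {s(x, y)}).Reachable w y := by
    intro w hw
    have h1 : (T.deleteEdges {s(x, y)}).Reachable w ws := by
      refine ⟨(tp hT w ws).toDeleteEdges {s(x, y)} ?_⟩
      intro e hee hes
      rw [Set.mem_singleton_iff] at hes; subst hes
      exact hdisjN ⟨x, hx, hpcS w hw ws hs0 x (Walk.fst_mem_support_of_mem_edges _ hee)⟩
    exact h1.trans hs0y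
  have haR : ∀ v', v' ∈ B x ∩ B y → v' ∈ R → False := by
    intro v' hv' hvR
    exact hy ⟨v', hvR, hv'.2⟩
  have haS : ∀ v', v' ∈ B x ∩ B y → v' ∈ S → False := by
    intro v' hv' hvS
    exact hdisjN ⟨x, hx, ⟨v', hvS, hv'.1⟩⟩
  refine ⟨(B x ∩ B y) \ (V1 ∪ V2), ?_, ?_, ?_⟩
  · obtain ⟨ρ, hρR, hρBx⟩ := hx
    have hsub : (B x ∩ B y) \ (V1 ∪ V2) ⊆ B x \ {ρ} := by
      intro z hz
      refine ⟨hz.1.1, ?_⟩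
      intro hzρ
      rw [Set.mem_singleton_iff] at hzρ; subst hzρ
      exact haR z hz.1 hρR
    calc ((B x ∩ B y) \ (V1 ∪ V2)).ncard ≤ (B x \ {ρ}).ncard :=
          Set.ncard_le_ncard hsub (Set.toFinite _)
      _ = (B x).ncard - 1 := Set.ncard_diff_singleton_of_mem hρBx
      _ ≤ k := by have := hbag x; omega
  · apply Set.eq_empty_iff_forall_notMem.2
    intro z hz
    exact hz.1.2 hz.2
  · intro v1 hv1 v2 hv2 p
    obtain ⟨u1, hu1, u2, hu2, Wk, hWkpath, hWsub, hanch2, hanch1⟩ := cln hdisjV hv1 hv2 p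
    obtain ⟨α, β, U, hornt, hUsub, hUclean⟩ := hHU u1 hu1 u2 hu2 Wk hWkpath hanch2 hanch1
    have hget : ∃ ξ ∈ U.support, ξ ∈ B x ∧ ξ ∈ B y := by
      rcases hornt with ⟨hαR, hβS⟩ | ⟨hαS, hβR⟩
      · refine crossing hT hxy hB4 hedge U ?_ ?_
        · obtain ⟨w0, hw0⟩ := hcov α
          exact ⟨w0, hw0, hXreach w0 ⟨α, hαR, hw0⟩⟩
        · obtain ⟨w0, hw0⟩ := hcov β
          exact ⟨w0, hw0, hYreach w0 ⟨β, hβS, hw0⟩⟩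
      · have hcr := crossing hT hxy hB4 hedge U.reverse ?_ ?_
        · obtain ⟨ξ, hξs, hξ⟩ := hcr
          exact ⟨ξ, (mem_rev U ξ).1 hξs, hξ⟩
        · obtain ⟨w0, hw0⟩ := hcov β
          exact ⟨w0, hw0, hXreach w0 ⟨β, hβR, hw0⟩⟩
        · obtain ⟨w0, hw0⟩ := hcov α
          exact ⟨w0, hw0, hYreach w0 ⟨α, hαS, hw0⟩⟩
    obtain ⟨ξ, hξU, hξx, hξy⟩ := hget
    have hξV : ξ ∉ V1 ∪ V2 := by
      intro hmem
      rcases hUclean ξ hξU hmem with hR | hS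
      · exact haR ξ ⟨hξx, hξy⟩ hR
      · exact haS ξ ⟨hξx, hξy⟩ hS
    exact ⟨ξ, hWsub ξ (hUsub ξ hξU), ⟨⟨hξx, hξy⟩, hξV⟩⟩

end Win

end StmtZero

/-- If `G` has a tree decomposition of width at most `k > 1`,
`V1`, `V2` are nonempty connected vertex sets whose heights (w.r.t. `h`) differ
by at least `k + 1`, and `h` satisfies the level-separation property, then there
is a set `Y` of at most `k` vertices strongly disconnecting `V1` and `V2`. -/
theorem stmt0 {V : Type} [Fintype V] (G : SimpleGraph V) (k : ℕ) (hk : 1 < k)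
    (htw : ∃ (W : Type) (_ : Fintype W) (T : SimpleGraph W) (B : W → Set V),
      IsTreeDecomp G T B ∧ ∀ w, (B w).ncard ≤ k + 1)
    (h : V → ℕ) (V1 V2 : Set V) (hV1ne : V1.Nonempty) (hV2ne : V2.Nonempty)
    (hV1conn : (G.induce V1).Connected) (hV2conn : (G.induce V2).Connected)
    (a b : ℕ) (ha : IsGreatest (h '' V1) a) (hb : IsLeast (h '' V2) b)
    (hab : a + (k + 1) ≤ b)
    (hlevel : ∀ i : ℕ, a < i → i < b →
      ∃ Y : Set V, Y.Nonempty ∧ Y ⊆ {v | h v = i} ∧ (G.induce Y).Connected ∧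
        ∀ s ∈ V2, ∀ u : V, h u < i → ∀ p : G.Walk s u, ∃ y ∈ p.support, y ∈ Y) :
    ∃ Y : Set V, Y.ncard ≤ k ∧ Y ∩ (V1 ∪ V2) = ∅ ∧ SeparatesWalks G V1 V2 Y := by
  classical
  obtain ⟨W, _, T, B, hdec, hbag⟩ := htw
  open StmtZero in
  -- height bounds
  have hV1h : ∀ v ∈ V1, h v ≤ a := fun v hv => ha.2 ⟨v, hv, rfl⟩
  have hV2h : ∀ v ∈ V2, b ≤ h v := fun v hv => hb.2 ⟨v, hv, rfl⟩
  have hdisjV : ∀ z, z ∈ V1 → z ∈ V2 → False := by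
    intro z h1 h2
    have := hV1h z h1
    have := hV2h z h2
    omega
  -- choose the level sets
  have hYex : ∀ m : Fin k, ∃ Ym : Set V, Ym.Nonempty ∧ Ym ⊆ {v | h v = a + 1 + (m : ℕ)} ∧
      (G.induce Ym).Connected ∧ ∀ s ∈ V2, ∀ u : V, h u < a + 1 + (m : ℕ) →
        ∀ p : G.Walk s u, ∃ y ∈ p.support, y ∈ Ym := by
    intro m
    exact hlevel (a + 1 + (m : ℕ)) (by omega) (by have := m.isLt; omega)
  choose Ys hYne hYsub hYconn hYsep using hYex
  have hYh : ∀ m : Fin k, ∀ v ∈ Ys m, h v = a + 1 + (m : ℕ) := fun m v hv => hYsub m hv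
  have hYV : ∀ m : Fin k, ∀ z ∈ Ys m, z ∈ V1 ∪ V2 → False := by
    intro m z hz hmem
    have hzh := hYh m z hz
    have := m.isLt
    rcases hmem with h1 | h2
    · have := hV1h z h1; omega
    · have := hV2h z h2; omega
  have hYocc : ∀ m : Fin k, ∀ u1 ∈ V1, ∀ u2 ∈ V2, ∀ Wk : G.Walk u2 u1,
      ∃ y ∈ Wk.support, y ∈ Ys m := by
    intro m u1 h1 u2 h2 Wk
    exact hYsep m u2 h2 u1 (by have := hV1h u1 h1; omega) Wk
  -- the indexed family of k+2 connected sets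
  set PP : Fin (k + 2) → Set V := fun i =>
    if _h0 : (i : ℕ) = 0 then V1 else if _h1 : (i : ℕ) = k + 1 then V2
    else Ys ⟨(i : ℕ) - 1, by have := i.isLt; omega⟩ with hPP
  have hPP0 : ∀ i : Fin (k + 2), (i : ℕ) = 0 → PP i = V1 := by
    intro i h0; simp only [hPP]; rw [dif_pos h0]
  have hPPL : ∀ i : Fin (k + 2), (i : ℕ) ≠ 0 → (i : ℕ) = k + 1 → PP i = V2 := by
    intro i h0 h1; simp only [hPP]; rw [dif_neg h0, dif_pos h1]
  have hPPM : ∀ (i : Fin (k + 2)) (h0 : (i : ℕ) ≠ 0) (h1 : (i : ℕ) ≠ k + 1),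
      PP i = Ys ⟨(i : ℕ) - 1, by have := i.isLt; omega⟩ := by
    intro i h0 h1; simp only [hPP]; rw [dif_neg h0, dif_neg h1]
  have hclass : ∀ i : Fin (k + 2), PP i = V1 ∨ PP i = V2 ∨ ∃ m : Fin k, PP i = Ys m := by
    intro i
    by_cases h0 : (i : ℕ) = 0
    · exact Or.inl (hPP0 i h0)
    · by_cases h1 : (i : ℕ) = k + 1
      · exact Or.inr (Or.inl (hPPL i h0 h1))
      · exact Or.inr (Or.inr ⟨_, hPPM i h0 h1⟩)
  have hPPval : ∀ i : Fin (k + 2), ∀ v ∈ PP i,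
      ((i : ℕ) = 0 ∧ h v ≤ a) ∨ ((i : ℕ) = k + 1 ∧ b ≤ h v) ∨
        (1 ≤ (i : ℕ) ∧ (i : ℕ) ≤ k ∧ h v = a + (i : ℕ)) := by
    intro i v hv
    by_cases h0 : (i : ℕ) = 0
    · rw [hPP0 i h0] at hv
      exact Or.inl ⟨h0, hV1h v hv⟩
    · by_cases h1 : (i : ℕ) = k + 1
      · rw [hPPL i h0 h1] at hv
        exact Or.inr (Or.inl ⟨h1, hV2h v hv⟩)
      · rw [hPPM i h0 h1] at hv
        have hv1 := hYh _ v hv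
        have hv2 := i.isLt
        refine Or.inr (Or.inr ⟨by omega, by omega, ?_⟩)
        rw [hv1]
        simp only []
        omega
  have hPPdisj : ∀ i j : Fin (k + 2), i ≠ j → ∀ z, z ∈ PP i → z ∈ PP j → False := by
    intro i j hne z hi hj
    have h1 := hPPval i z hi
    have h2 := hPPval j z hj
    have hvne : (i : ℕ) ≠ (j : ℕ) := fun hv => hne (Fin.eq_of_val_eq hv)
    rcases h1 with ⟨e1, b1⟩ | ⟨e1, b1⟩ | ⟨e1a, e1b, b1⟩ <;>
      rcases h2 with ⟨e2, b2⟩ | ⟨e2, b2⟩ | ⟨e2a, e2b, b2⟩ <;> omega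
  have hPPne : ∀ i, (PP i).Nonempty := by
    intro i
    rcases hclass i with hi | hi | ⟨m, hi⟩ <;> rw [hi]
    · exact hV1ne
    · exact hV2ne
    · exact hYne m
  have hPPconn : ∀ i, (G.induce (PP i)).Connected := by
    intro i
    rcases hclass i with hi | hi | ⟨m, hi⟩ <;> rw [hi]
    · exact hV1conn
    · exact hV2conn
    · exact hYconn m
  obtain ⟨hT, hcov, hedge, hB4⟩ := id hdec
  by_cases hpair : ∀ i j : Fin (k + 2), ((Nds B (PP i)) ∩ (Nds B (PP j))).Nonempty
  · -- all subtrees pairwise intersect: Helly gives a too-large bag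
    exfalso
    have hpc : ∀ i, PC hT (Nds B (PP i)) := fun i => pc_nds hT hB4 hedge (hPPconn i)
    obtain ⟨w, hw⟩ := helly hT (k + 1) (fun i => Nds B (PP i)) hpc hpair
    choose rep hrep1 hrep2 using hw
    have hinj : Function.Injective rep := by
      intro i j hij
      by_contra hne
      exact hPPdisj i j hne (rep i) (hrep1 i) (hij ▸ hrep1 j)
    have hsub : ↑(Finset.univ.image rep) ⊆ B w := by
      intro z hz
      rw [Finset.coe_image] at hz
      obtain ⟨i, _, rfl⟩ := hz
      exact hrep2 i
    have hcard : (Finset.univ.image rep).card = k + 2 := by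
      rw [Finset.card_image_of_injective _ hinj, Finset.card_univ, Fintype.card_fin]
    have hle := Set.ncard_le_ncard hsub (Set.toFinite _)
    rw [Set.ncard_coe_finset, hcard] at hle
    have := hbag w
    omega
  · -- some pair of subtrees is disjoint: win
    simp only [not_forall] at hpair
    obtain ⟨i, j, hij⟩ := hpair
    rcases hclass i with hi | hi | ⟨mi, hi⟩ <;> rcases hclass j with hj | hj | ⟨mj, hj⟩ <;>
        rw [hi, hj] at hij
    · -- V1 V1 : impossible
      exfalso
      obtain ⟨v0, hv0⟩ := hV1ne
      obtain ⟨w0, hw0⟩ := hcov v0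
      exact hij ⟨w0, ⟨v0, hv0, hw0⟩, ⟨v0, hv0, hw0⟩⟩
    · exact winlem hdec hbag hdisjV hV1ne hV2ne hV1conn hV2conn hij hu_D
    · exact winlem hdec hbag hdisjV hV1ne (hYne mj) hV1conn (hYconn mj) hij
        (hu_B (hYocc mj) (fun z hz h2 => hYV mj z hz (Or.inr h2)))
    · exact winlem hdec hbag hdisjV hV1ne hV2ne hV1conn hV2conn
        (fun ⟨w0, h1, h2⟩ => hij ⟨w0, h2, h1⟩) hu_D
    · exfalso
      obtain ⟨v0, hv0⟩ := hV2ne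
      obtain ⟨w0, hw0⟩ := hcov v0
      exact hij ⟨w0, ⟨v0, hv0, hw0⟩, ⟨v0, hv0, hw0⟩⟩
    · exact winlem hdec hbag hdisjV hV2ne (hYne mj) hV2conn (hYconn mj) hij
        (hu_C (hYocc mj) (fun z hz h1 => hYV mj z hz (Or.inl h1)))
    · exact winlem hdec hbag hdisjV hV1ne (hYne mi) hV1conn (hYconn mi)
        (fun ⟨w0, h1, h2⟩ => hij ⟨w0, h2, h1⟩)
        (hu_B (hYocc mi) (fun z hz h2 => hYV mi z hz (Or.inr h2)))
    · exact winlem hdec hbag hdisjV hV2ne (hYne mi) hV2conn (hYconn mi)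
        (fun ⟨w0, h1, h2⟩ => hij ⟨w0, h2, h1⟩)
        (hu_C (hYocc mi) (fun z hz h1 => hYV mi z hz (Or.inl h1)))
    · exact winlem hdec hbag hdisjV (hYne mi) (hYne mj) (hYconn mi) (hYconn mj) hij
        (hu_A (hYocc mi) (hYocc mj) (hYV mi) (hYV mj))
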